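/- Let Σ be a positive definite real p×p matrix with Σ ∈ 𝒮_𝒢, and let τ̂ ∈ ℝ^P. Consider the loss L(t) = (τ̂ − t)ᵀ Σ⁻¹ (τ̂ − t) on the set of vectors t ∈ ℝ^P that are constant on each block ℬ_ℓ. Then L is uniquely minimized on this set at the vector τ̃ = Γ τ̂, whose entries are the blockwise averages of τ̂: for every block ℬ_ℓ and every r ∈ ℬ_ℓ, τ̃_r = (1/|ℬ_ℓ|) Σ_{s ∈ ℬ_ℓ} τ̂_s. -/

import Mathlib

open Matrix Finset

abbrev PairIdx (d : ℕ) := {p : Fin d × Fin d // p.1 < p.2}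

/-- Pairs `r` and `s` lie in the same block: the unordered pairs of cluster labels coincide. -/
def sameBlock {d K : ℕ} (g : Fin d → Fin K) (r s : PairIdx d) : Prop :=
  (g r.1.1 = g s.1.1 ∧ g r.1.2 = g s.1.2) ∨ (g r.1.1 = g s.1.2 ∧ g r.1.2 = g s.1.1)

instance {d K : ℕ} (g : Fin d → Fin K) : DecidableRel (sameBlock g) :=
  fun r s => by unfold sameBlock; infer_instance

/-- The overlap type `φ̄(r,s)`: the multiset of cluster labels of the elements of
`{i_r, j_r} ∩ {i_s, j_s}`.  The empty multiset encodes the type `(0,0)`, the singleton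
`{k}` encodes `(0,k)`, and the two-element multiset `{k₁,k₂}` encodes
`(min(k₁,k₂), max(k₁,k₂))`. -/
def overlap {d K : ℕ} (g : Fin d → Fin K) (r s : PairIdx d) : Multiset (Fin K) :=
  (({r.1.1, r.1.2} ∩ {s.1.1, s.1.2} : Finset (Fin d)).val.map g)

/-- The cardinality of the block containing `r`. -/
def blockCard {d K : ℕ} (g : Fin d → Fin K) (r : PairIdx d) : ℕ :=
  (Finset.univ.filter (fun t => sameBlock g r t)).card

/-- The blockwise-averaging matrix `Γ`. -/
noncomputable def Gamma {d K : ℕ} (g : Fin d → Fin K) :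
    Matrix (PairIdx d) (PairIdx d) ℝ :=
  Matrix.of fun r s => if sameBlock g r s then (1 : ℝ) / (blockCard g r) else 0

/-- Membership in the class `𝒮_𝒢`. -/
def inSG {d K : ℕ} (g : Fin d → Fin K) (S : Matrix (PairIdx d) (PairIdx d) ℝ) : Prop :=
  S.IsSymm ∧ ∀ r r' s s' : PairIdx d, sameBlock g r r' → sameBlock g s s' →
    overlap g r s = overlap g r' s' → S r s = S r' s'

section Aux
variable {d K : ℕ} (g : Fin d → Fin K)

lemma sameBlock_refl (r : PairIdx d) : sameBlock g r r := Or.inl ⟨rfl, rfl⟩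

lemma sameBlock_symm {r s : PairIdx d} (h : sameBlock g r s) : sameBlock g s r := by
  rcases h with ⟨h1, h2⟩ | ⟨h1, h2⟩
  · exact Or.inl ⟨h1.symm, h2.symm⟩
  · exact Or.inr ⟨h2.symm, h1.symm⟩

lemma sameBlock_trans {r s t : PairIdx d} (h : sameBlock g r s) (h' : sameBlock g s t) :
    sameBlock g r t := by
  rcases h with ⟨h1, h2⟩ | ⟨h1, h2⟩ <;> rcases h' with ⟨h3, h4⟩ | ⟨h3, h4⟩
  · exact Or.inl ⟨h1.trans h3, h2.trans h4⟩
  · exact Or.inr ⟨h1.trans h3, h2.trans h4⟩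
  · exact Or.inr ⟨h1.trans h4, h2.trans h3⟩
  · exact Or.inl ⟨h1.trans h4, h2.trans h3⟩

lemma block_eq {r r' : PairIdx d} (h : sameBlock g r r') :
    Finset.univ.filter (fun t => sameBlock g r t) =
      Finset.univ.filter (fun t => sameBlock g r' t) := by
  ext t
  simp only [Finset.mem_filter, Finset.mem_univ, true_and]
  exact ⟨fun h' => sameBlock_trans g (sameBlock_symm g h) h',
    fun h' => sameBlock_trans g h h'⟩

lemma blockCard_eq {r r' : PairIdx d} (h : sameBlock g r r') :
    blockCard g r = blockCard g r' := by
  unfold blockCard; rw [block_eq g h]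

lemma blockCard_pos (r : PairIdx d) : 0 < blockCard g r :=
  Finset.card_pos.2 ⟨r, by simp [sameBlock_refl]⟩

lemma mulVec_Gamma (τhat : PairIdx d → ℝ) (r : PairIdx d) :
    (Gamma g).mulVec τhat r =
      (∑ s ∈ Finset.univ.filter (fun t => sameBlock g r t), τhat s) / (blockCard g r : ℝ) := by
  unfold Matrix.mulVec Gamma dotProduct
  simp only [Matrix.of_apply]
  rw [Finset.sum_div]
  rw [show (∑ x : PairIdx d, (if sameBlock g r x then (1:ℝ) / (blockCard g r) else 0) * τhat x)
      = ∑ x : PairIdx d, (if sameBlock g r x then τhat x / (blockCard g r : ℝ) else 0) from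
    Finset.sum_congr rfl fun x _ => by split_ifs <;> ring]
  rw [Finset.sum_filter]

lemma g_swap {u v : Fin d} (h : g u = g v) (x : Fin d) : g (Equiv.swap u v x) = g x := by
  rcases eq_or_ne x u with rfl | hu
  · rw [Equiv.swap_apply_left]; exact h.symm
  rcases eq_or_ne x v with rfl | hv
  · rw [Equiv.swap_apply_right]; exact h
  · rw [Equiv.swap_apply_of_ne_of_ne hu hv]

lemma exists_perm_aux {a b c e : Fin d} (hab : a ≠ b) (hce : c ≠ e)
    (h1 : g a = g c) (h2 : g b = g e) :
    ∃ σ : Equiv.Perm (Fin d), (∀ x, g (σ x) = g x) ∧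
      ({σ a, σ b} : Finset (Fin d)) = {c, e} := by
  rcases eq_or_ne a c with rfl | hac
  · rcases eq_or_ne b e with rfl | hbe
    · exact ⟨1, fun x => rfl, rfl⟩
    · refine ⟨Equiv.swap b e, g_swap g h2, ?_⟩
      rw [Equiv.swap_apply_of_ne_of_ne hab hce, Equiv.swap_apply_left]
  · rcases eq_or_ne b e with rfl | hbe
    · refine ⟨Equiv.swap a c, g_swap g h1, ?_⟩
      have hbc : b ≠ c := fun h => hce (h ▸ rfl)
      rw [Equiv.swap_apply_left, Equiv.swap_apply_of_ne_of_ne hab.symm hbc]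
    · rcases eq_or_ne a e with rfl | hae
      · -- shared element a = e; all four labels equal on relevant pairs
        have hbc : g b = g c := by rw [h2, ← h1]
        refine ⟨Equiv.swap b c, g_swap g hbc, ?_⟩
        rw [Equiv.swap_apply_of_ne_of_ne hab hac, Equiv.swap_apply_left]
        rw [Finset.pair_comm]
      · rcases eq_or_ne b c with rfl | hbc
        · have hae' : g a = g e := by rw [h1, ← h2]
          refine ⟨Equiv.swap a e, g_swap g hae', ?_⟩
          rw [Equiv.swap_apply_left, Equiv.swap_apply_of_ne_of_ne hab.symm hbe]
          rw [Finset.pair_comm]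
        · refine ⟨(Equiv.swap a c) * (Equiv.swap b e), ?_, ?_⟩
          · intro x
            simp only [Equiv.Perm.mul_apply]
            rw [g_swap g h1, g_swap g h2]
          · simp only [Equiv.Perm.mul_apply]
            rw [Equiv.swap_apply_of_ne_of_ne hab hae, Equiv.swap_apply_left,
              Equiv.swap_apply_left, Equiv.swap_apply_of_ne_of_ne hae.symm hce.symm]

lemma exists_perm {r r' : PairIdx d} (h : sameBlock g r r') :
    ∃ σ : Equiv.Perm (Fin d), (∀ x, g (σ x) = g x) ∧
      ({σ r.1.1, σ r.1.2} : Finset (Fin d)) = {r'.1.1, r'.1.2} := by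
  have hab : r.1.1 ≠ r.1.2 := ne_of_lt r.2
  have hce : r'.1.1 ≠ r'.1.2 := ne_of_lt r'.2
  rcases h with ⟨h1, h2⟩ | ⟨h1, h2⟩
  · exact exists_perm_aux g hab hce h1 h2
  · obtain ⟨σ, hσ1, hσ2⟩ := exists_perm_aux g hab hce.symm h1 h2
    exact ⟨σ, hσ1, by rw [hσ2, Finset.pair_comm]⟩

/-- The permutation of pairs induced by a permutation of indices. -/
def pairMap (σ : Equiv.Perm (Fin d)) (s : PairIdx d) : PairIdx d :=
  if h : σ s.1.1 < σ s.1.2 then ⟨(σ s.1.1, σ s.1.2), h⟩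
  else ⟨(σ s.1.2, σ s.1.1), by
    rcases lt_or_eq_of_le (not_lt.1 h) with h' | h'
    · exact h'
    · exact absurd (σ.injective h') (ne_of_lt s.2).symm⟩

lemma pairMap_set (σ : Equiv.Perm (Fin d)) (s : PairIdx d) :
    ({(pairMap σ s).1.1, (pairMap σ s).1.2} : Finset (Fin d)) = {σ s.1.1, σ s.1.2} := by
  unfold pairMap
  split_ifs with h
  · rfl
  · exact Finset.pair_comm _ _

lemma pair_eq_of_set {r s : PairIdx d}
    (h : ({r.1.1, r.1.2} : Finset (Fin d)) = {s.1.1, s.1.2}) : r = s := by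
  have h1 : r.1.1 = s.1.1 ∨ r.1.1 = s.1.2 := by
    have := h ▸ (Finset.mem_insert_self r.1.1 {r.1.2}); simpa using this
  have h2 : r.1.2 = s.1.1 ∨ r.1.2 = s.1.2 := by
    have : r.1.2 ∈ ({r.1.1, r.1.2} : Finset (Fin d)) := by simp
    rw [h] at this; simpa using this
  have hr := r.2; have hs := s.2
  rcases h1 with h1 | h1 <;> rcases h2 with h2 | h2
  · rw [h1, h2] at hr; exact absurd hr (lt_irrefl _)
  · exact Subtype.ext (Prod.ext h1 h2)
  · rw [h1, h2] at hr; exact absurd hs (not_lt.2 hr.le)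
  · rw [h1, h2] at hr; exact absurd hr (lt_irrefl _)

lemma pairMap_pairMap (σ : Equiv.Perm (Fin d)) (s : PairIdx d) :
    pairMap σ⁻¹ (pairMap σ s) = s := by
  apply pair_eq_of_set
  rw [pairMap_set,
    show ({σ⁻¹ (pairMap σ s).1.1, σ⁻¹ (pairMap σ s).1.2} : Finset (Fin d))
        = Finset.image (⇑(σ⁻¹)) {(pairMap σ s).1.1, (pairMap σ s).1.2} by
      rw [Finset.image_insert, Finset.image_singleton],
    pairMap_set σ s, Finset.image_insert, Finset.image_singleton]
  simp

/-- The induced equivalence on pairs. -/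
def pairEquiv (σ : Equiv.Perm (Fin d)) : Equiv.Perm (PairIdx d) where
  toFun := pairMap σ
  invFun := pairMap σ⁻¹
  left_inv s := pairMap_pairMap σ s
  right_inv s := by
    have := pairMap_pairMap σ⁻¹ s
    rwa [inv_inv] at this

lemma sameBlock_pairMap {σ : Equiv.Perm (Fin d)} (hσ : ∀ x, g (σ x) = g x)
    (s : PairIdx d) : sameBlock g s (pairMap σ s) := by
  unfold pairMap
  split_ifs with h
  · exact Or.inl ⟨(hσ _).symm, (hσ _).symm⟩
  · exact Or.inr ⟨(hσ _).symm, (hσ _).symm⟩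

lemma overlap_pairMap {σ : Equiv.Perm (Fin d)} (hσ : ∀ x, g (σ x) = g x)
    {r r' : PairIdx d} (hrr' : ({σ r.1.1, σ r.1.2} : Finset (Fin d)) = {r'.1.1, r'.1.2})
    (s : PairIdx d) : overlap g r s = overlap g r' (pairMap σ s) := by
  unfold overlap
  rw [pairMap_set, ← hrr']
  have h1 : ({σ r.1.1, σ r.1.2} : Finset (Fin d)) = Finset.image σ {r.1.1, r.1.2} := by
    rw [Finset.image_insert, Finset.image_singleton]
  have h2 : ({σ s.1.1, σ s.1.2} : Finset (Fin d)) = Finset.image σ {s.1.1, s.1.2} := by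
    rw [Finset.image_insert, Finset.image_singleton]
  rw [h1, h2, ← Finset.image_inter _ _ σ.injective]
  rw [Finset.image_val, Multiset.dedup_eq_self.2]
  · rw [Multiset.map_map]
    apply Multiset.map_congr rfl
    intro x _
    exact (hσ x).symm
  · exact Multiset.Nodup.map σ.injective (({r.1.1, r.1.2} ∩ {s.1.1, s.1.2} : Finset (Fin d)).nodup)

/-- The submodule of blockwise-constant vectors. -/
def blockConst (g : Fin d → Fin K) : Submodule ℝ (PairIdx d → ℝ) where
  carrier := {v | ∀ r s : PairIdx d, sameBlock g r s → v r = v s}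
  add_mem' := fun h1 h2 r s hrs => by
    simp only [Pi.add_apply, h1 r s hrs, h2 r s hrs]
  zero_mem' := fun r s _ => rfl
  smul_mem' := fun c v hv r s hrs => by
    simp only [Pi.smul_apply, hv r s hrs]

lemma mulVec_mem_blockConst {S : Matrix (PairIdx d) (PairIdx d) ℝ} (hS : inSG g S)
    {v : PairIdx d → ℝ} (hv : v ∈ blockConst g) : S.mulVec v ∈ blockConst g := by
  intro r r' h
  obtain ⟨σ, hσ1, hσ2⟩ := exists_perm g h
  show ∑ s, S r s * v s = ∑ s, S r' s * v s
  rw [← Equiv.sum_comp (pairEquiv σ) (fun s => S r' s * v s)]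
  apply Finset.sum_congr rfl
  intro s _
  have hs : sameBlock g s (pairMap σ s) := sameBlock_pairMap g hσ1 s
  have ho : overlap g r s = overlap g r' (pairMap σ s) := overlap_pairMap g hσ1 hσ2 s
  show S r s * v s = S r' (pairMap σ s) * v (pairMap σ s)
  rw [← hS.2 r r' s (pairMap σ s) h hs ho, ← hv s (pairMap σ s) hs]


lemma inv_mulVec_mem_blockConst {S : Matrix (PairIdx d) (PairIdx d) ℝ} (hS : inSG g S)
    (hpd : S.PosDef) {w : PairIdx d → ℝ} (hw : w ∈ blockConst g) :
    S⁻¹.mulVec w ∈ blockConst g := by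
  have hdet : IsUnit S.det := isUnit_iff_ne_zero.2 (ne_of_gt hpd.det_pos)
  -- restriction of mulVec to the submodule
  let f : blockConst g →ₗ[ℝ] blockConst g :=
    (S.mulVecLin).restrict (fun v hv => mulVec_mem_blockConst g hS hv)
  have hinj : Function.Injective f := by
    intro x y hxy
    apply Subtype.ext
    have hxy' : S.mulVec x.1 = S.mulVec y.1 := congrArg Subtype.val hxy
    have := congrArg (fun z => S⁻¹.mulVec z) hxy'
    simpa [Matrix.mulVec_mulVec, Matrix.nonsing_inv_mul S hdet] using this
  have hsurj : Function.Surjective f := (LinearMap.injective_iff_surjective).1 hinj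
  obtain ⟨u, hu⟩ := hsurj ⟨w, hw⟩
  have hu' : S.mulVec u.1 = w := congrArg Subtype.val hu
  have : S⁻¹.mulVec w = u.1 := by
    rw [← hu', Matrix.mulVec_mulVec, Matrix.nonsing_inv_mul S hdet, Matrix.one_mulVec]
  rw [this]
  exact u.2

lemma Gamma_fix {z : PairIdx d → ℝ} (hz : z ∈ blockConst g) :
    (Gamma g).mulVec z = z := by
  funext r
  rw [mulVec_Gamma]
  have : ∑ s ∈ Finset.univ.filter (fun t => sameBlock g r t), z s
      = (blockCard g r : ℝ) * z r := by
    rw [Finset.sum_congr rfl (fun s hs => hz s r (sameBlock_symm g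
      (Finset.mem_filter.1 hs).2) : ∀ s ∈ _, z s = z r), Finset.sum_const, nsmul_eq_mul]
    rfl
  have hc : (blockCard g r : ℝ) ≠ 0 := Nat.cast_ne_zero.2 (blockCard_pos g r).ne'
  rw [this]
  field_simp

lemma Gamma_mulVec_mem (τhat : PairIdx d → ℝ) : (Gamma g).mulVec τhat ∈ blockConst g := by
  intro r s h
  rw [mulVec_Gamma, mulVec_Gamma, block_eq g h, blockCard_eq g h]

lemma Gamma_symm : (Gamma g)ᵀ = Gamma g := by
  ext r s
  simp only [Matrix.transpose_apply, Gamma, Matrix.of_apply]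
  by_cases h : sameBlock g r s
  · rw [if_pos h, if_pos (sameBlock_symm g h), blockCard_eq g h]
  · rw [if_neg h, if_neg (fun h' => h (sameBlock_symm g h'))]

lemma resid_orth (τhat : PairIdx d → ℝ) {z : PairIdx d → ℝ} (hz : z ∈ blockConst g) :
    (τhat - (Gamma g).mulVec τhat) ⬝ᵥ z = 0 := by
  rw [sub_dotProduct]
  have : (Gamma g).mulVec τhat ⬝ᵥ z = τhat ⬝ᵥ z := by
    rw [dotProduct_comm, Matrix.dotProduct_mulVec, ← Matrix.mulVec_transpose,
      Gamma_symm, Gamma_fix g hz, dotProduct_comm]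
  rw [this, sub_self]

end Aux

/-- The loss `L(t) = (τ̂ − t)ᵀ Σ⁻¹ (τ̂ − t)` is uniquely minimized over the
blockwise-constant vectors at the blockwise average `τ̃ = Γ τ̂`. -/
theorem statement_1 {d K : ℕ} (hd : 2 ≤ d) (hK : 1 ≤ K)
    (g : Fin d → Fin K) (hg : Function.Surjective g)
    (Sig : Matrix (PairIdx d) (PairIdx d) ℝ) (hpd : Sig.PosDef) (hSG : inSG g Sig)
    (τhat : PairIdx d → ℝ)
    (L : (PairIdx d → ℝ) → ℝ)
    (hL : L = fun t => (τhat - t) ⬝ᵥ (Sig⁻¹).mulVec (τhat - t))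
    (τtilde : PairIdx d → ℝ) (hτ : τtilde = (Gamma g).mulVec τhat) :
    (∀ r s : PairIdx d, sameBlock g r s → τtilde r = τtilde s) ∧
    (∀ t : PairIdx d → ℝ, (∀ r s : PairIdx d, sameBlock g r s → t r = t s) →
      L τtilde ≤ L t) ∧
    (∀ t : PairIdx d → ℝ, (∀ r s : PairIdx d, sameBlock g r s → t r = t s) →
      L t = L τtilde → t = τtilde) ∧
    (∀ r : PairIdx d,
      τtilde r = (∑ s ∈ Finset.univ.filter (fun t => sameBlock g r t), τhat s)
        / (blockCard g r : ℝ)) := by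
  subst hL hτ
  set A := Sig⁻¹ with hA
  have hApd : A.PosDef := hpd.inv
  have hAsymm : Aᵀ = A := by
    rw [hA, Matrix.transpose_nonsing_inv, hSG.1.eq]
  set τt := (Gamma g).mulVec τhat with hτt
  have htmem : τt ∈ blockConst g := Gamma_mulVec_mem g τhat
  have cross1 : ∀ w ∈ blockConst g, (τhat - τt) ⬝ᵥ A.mulVec w = 0 :=
    fun w hw => resid_orth g τhat (inv_mulVec_mem_blockConst g hSG hpd hw)
  have cross2 : ∀ w ∈ blockConst g, w ⬝ᵥ A.mulVec (τhat - τt) = 0 := by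
    intro w hw
    rw [Matrix.dotProduct_mulVec, ← Matrix.mulVec_transpose, hAsymm,
      dotProduct_comm]
    exact cross1 _ hw
  have expand : ∀ t : PairIdx d → ℝ, (∀ r s : PairIdx d, sameBlock g r s → t r = t s) →
      (τhat - t) ⬝ᵥ A.mulVec (τhat - t) =
        (τhat - τt) ⬝ᵥ A.mulVec (τhat - τt) + (τt - t) ⬝ᵥ A.mulVec (τt - t) := by
    intro t ht
    have htV : t ∈ blockConst g := ht
    have hwV : τt - t ∈ blockConst g := sub_mem htmem htV
    have hsplit : τhat - t = (τhat - τt) + (τt - t) := by ring_nf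
    rw [hsplit, Matrix.mulVec_add, add_dotProduct, dotProduct_add,
      dotProduct_add, cross1 _ hwV, cross2 _ hwV, add_zero, zero_add]
  refine ⟨?_, ?_, ?_, ?_⟩
  · intro r s h
    exact htmem r s h
  · intro t ht
    simp only []
    rw [expand t ht]
    have : 0 ≤ (τt - t) ⬝ᵥ A.mulVec (τt - t) := by
      have := hApd.posSemidef.dotProduct_mulVec_nonneg (τt - t)
      simpa using this
    linarith [expand τt (fun r s h => htmem r s h)]
  · intro t ht hLe
    simp only [] at hLe
    rw [expand t ht] at hLe
    have h0 : (τt - t) ⬝ᵥ A.mulVec (τt - t) = 0 := by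
      have := expand τt (fun r s h => htmem r s h)
      have h2 : (τt - τt) ⬝ᵥ A.mulVec (τt - τt) = 0 := by simp
      linarith [this, h2]
    by_contra hne
    have hw : τt - t ≠ 0 := fun h => hne (by
      have := sub_eq_zero.1 h; exact this.symm)
    have hpos : 0 < (τt - t) ⬝ᵥ A.mulVec (τt - t) := by
      simpa using hApd.dotProduct_mulVec_pos hw
    linarith
  · intro r
    exact mulVec_Gamma g τhat r
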